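/- Let α ∈ (0,1). Then there exists a positive integer K such that for every integer k ≥ K, (2k)^α · sin(π/(2k))^α · cos(α(π/2 − π/(2k))) > π^α · cos(απ/2). Geometrically, for k sufficiently large, the asymptotic line a − b = (2k)^α sin(π/(2k))^α cos(α(π/2 − π/(2k))) of the curve Γ_0 lies strictly below the asymptotic line a − b = π^α cos(απ/2) of the curve Γ. -/

import Mathlib

open Real

set_option maxHeartbeats 1000000

/-- Purely polynomial core inequality. -/
lemma poly_ineq (C S a x : ℝ) (hC : 0 < C) (hS : 0 < S) (ha0 : 0 < a) (ha1 : a < 1)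
    (hx0 : 0 < x) (hx1 : x ≤ 1) (hxs : 4 * C * x < 3 * S * a) :
    C < (1 - x ^ 2 / 4) * (C * (1 - x ^ 2 / 2) + (3/4) * S * (a * x)) := by
  have h1 : 4 * C * x * x < 3 * S * a * x := mul_lt_mul_of_pos_right hxs hx0
  have hx2 : x ^ 2 ≤ 1 := by nlinarith
  have hSax : 0 < S * a * x := mul_pos (mul_pos hS ha0) hx0
  have h2 : S * a * x * x ^ 2 ≤ S * a * x := by nlinarith
  nlinarith [mul_pos (mul_pos hC hx0) hx0, sq_nonneg (x*x), mul_pos hC (mul_pos hx0 hx0)]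

/-- Key scalar inequality: for `x` small enough,
`(sin x / x) * cos (α*π/2 - α*x) > cos (α*π/2)`. -/
lemma key_ineq (α x : ℝ) (hα0 : 0 < α) (hα1 : α < 1) (hx0 : 0 < x) (hx1 : x ≤ 1)
    (hxs : 4 * Real.cos (α * π / 2) * x < 3 * Real.sin (α * π / 2) * α) :
    (Real.sin x / x) * Real.cos (α * π / 2 - α * x) > Real.cos (α * π / 2) := by
  have hpi : (2:ℝ) < π := by linarith [Real.pi_gt_three]
  have hC : 0 < Real.cos (α * π / 2) := by
    apply Real.cos_pos_of_mem_Ioo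
    constructor <;> nlinarith [Real.pi_pos]
  have hS : 0 < Real.sin (α * π / 2) := by
    apply Real.sin_pos_of_pos_of_lt_pi <;> nlinarith [Real.pi_pos]
  have hax0 : 0 < α * x := mul_pos hα0 hx0
  have hax1 : α * x ≤ 1 := by nlinarith
  have hsinx : x - x ^ 3 / 4 < Real.sin x := by have := Real.sin_gt_sub_cube hx0; nlinarith [pow_pos hx0 3]
  have hsinax : α * x - (α * x) ^ 3 / 4 < Real.sin (α * x) :=
    by have := Real.sin_gt_sub_cube hax0; nlinarith [pow_pos hax0 3]
  have hcube : (α * x) ^ 3 ≤ α * x := by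
    have h1 : 0 ≤ (α * x) * (1 - (α * x) ^ 2) :=
      mul_nonneg hax0.le (by nlinarith)
    nlinarith
  have hsinax' : (3/4) * (α * x) ≤ Real.sin (α * x) := by nlinarith
  have hcosax : 1 - (α * x) ^ 2 / 2 ≤ Real.cos (α * x) := Real.one_sub_sq_div_two_le_cos
  have hax2 : (α * x) ^ 2 ≤ x ^ 2 := by
    have h : 0 < (1 - α) * (1 + α) := mul_pos (by linarith) (by linarith)
    nlinarith [sq_nonneg x]
  have hcos_lb : Real.cos (α * π / 2) * (1 - x ^ 2 / 2)
        + (3/4) * Real.sin (α * π / 2) * (α * x)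
      ≤ Real.cos (α * π / 2 - α * x) := by
    rw [Real.cos_sub]
    have h1 : Real.cos (α * π / 2) * (1 - (α * x) ^ 2 / 2)
        ≤ Real.cos (α * π / 2) * Real.cos (α * x) :=
      mul_le_mul_of_nonneg_left hcosax hC.le
    have h2 : Real.sin (α * π / 2) * ((3/4) * (α * x))
        ≤ Real.sin (α * π / 2) * Real.sin (α * x) :=
      mul_le_mul_of_nonneg_left hsinax' hS.le
    nlinarith [mul_le_mul_of_nonneg_left hax2 hC.le]
  have hB : 0 < Real.cos (α * π / 2) * (1 - x ^ 2 / 2)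
      + (3/4) * Real.sin (α * π / 2) * (α * x) := by
    have hx2 : x ^ 2 ≤ 1 := by nlinarith
    nlinarith [mul_pos (mul_pos hS hα0) hx0]
  have hcosv : 0 < Real.cos (α * π / 2 - α * x) := lt_of_lt_of_le hB hcos_lb
  have hq0 : (0:ℝ) ≤ 1 - x ^ 2 / 4 := by nlinarith
  have hr : 1 - x ^ 2 / 4 < Real.sin x / x := by
    rw [lt_div_iff₀ hx0]; nlinarith
  calc Real.cos (α * π / 2)
      < (1 - x ^ 2 / 4) * (Real.cos (α * π / 2) * (1 - x ^ 2 / 2)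
          + (3/4) * Real.sin (α * π / 2) * (α * x)) :=
        poly_ineq _ _ _ _ hC hS hα0 hα1 hx0 hx1 hxs
    _ ≤ (1 - x ^ 2 / 4) * Real.cos (α * π / 2 - α * x) :=
        mul_le_mul_of_nonneg_left hcos_lb hq0
    _ < (Real.sin x / x) * Real.cos (α * π / 2 - α * x) :=
        mul_lt_mul_of_pos_right hr hcosv

/-- For every `α ∈ (0,1)` there is a positive integer `K` such that for every `k ≥ K`,
`(2k)^α sin(π/(2k))^α cos(α(π/2 − π/(2k))) > π^α cos(απ/2)`: for `k` large enough the
asymptotic line of `Γ_0` lies strictly below the asymptotic line of `Γ`. -/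
theorem gl_asymptotic_line_eventually_below (α : ℝ) (hα : α ∈ Set.Ioo (0:ℝ) 1) :
    ∃ K : ℕ, 0 < K ∧ ∀ k : ℕ, K ≤ k →
      (2 * (k:ℝ)) ^ α * Real.sin (π / (2 * (k:ℝ))) ^ α *
          Real.cos (α * (π / 2 - π / (2 * (k:ℝ)))) >
        π ^ α * Real.cos (α * π / 2) := by
  obtain ⟨hα0, hα1⟩ := hα
  have hpi : (2:ℝ) < π := by linarith [Real.pi_gt_three]
  have hC : 0 < Real.cos (α * π / 2) := by
    apply Real.cos_pos_of_mem_Ioo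
    constructor <;> nlinarith [Real.pi_pos]
  have hS : 0 < Real.sin (α * π / 2) := by
    apply Real.sin_pos_of_pos_of_lt_pi <;> nlinarith [Real.pi_pos]
  set ε : ℝ := min 1 (3 * Real.sin (α * π / 2) * α / (4 * Real.cos (α * π / 2)))
    with hεdef
  have hε : 0 < ε := lt_min one_pos (by positivity)
  obtain ⟨K, hK⟩ := exists_nat_gt (π / ε)
  refine ⟨K + 1, Nat.succ_pos _, fun k hk => ?_⟩
  have hk1 : (1:ℝ) ≤ k := by
    have : (1:ℕ) ≤ k := le_trans (Nat.le_add_left 1 K) hk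
    exact_mod_cast this
  have hk0 : (0:ℝ) < k := lt_of_lt_of_le one_pos hk1
  set x : ℝ := π / (2 * (k:ℝ)) with hxdef
  have hx0 : 0 < x := by positivity
  have hkK : (K:ℝ) ≤ k := by exact_mod_cast le_trans (Nat.le_succ K) hk
  have hxε : x < ε := by
    rw [hxdef, div_lt_iff₀ (by positivity)]
    have h1 : π < ε * K := by
      rw [div_lt_iff₀ hε] at hK; linarith
    nlinarith
  have hx1 : x ≤ 1 := le_of_lt (lt_of_lt_of_le hxε (min_le_left _ _))
  have hxs : 4 * Real.cos (α * π / 2) * x < 3 * Real.sin (α * π / 2) * α := by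
    have h2 : x < 3 * Real.sin (α * π / 2) * α / (4 * Real.cos (α * π / 2)) :=
      lt_of_lt_of_le hxε (min_le_right _ _)
    rw [lt_div_iff₀ (by positivity)] at h2; linarith
  have key := key_ineq α x hα0 hα1 hx0 hx1 hxs
  have hsx0 : 0 < Real.sin x :=
    Real.sin_pos_of_pos_of_lt_pi hx0 (by nlinarith)
  have h2k : (0:ℝ) ≤ 2 * (k:ℝ) := by positivity
  have hπeq : 2 * (k:ℝ) * x = π := by
    rw [hxdef]; field_simp
  set r : ℝ := Real.sin x / x with hrdef
  have hr0 : 0 < r := div_pos hsx0 hx0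
  have hsplit : Real.sin x = x * r := by rw [hrdef]; field_simp
  have hLHS : (2 * (k:ℝ)) ^ α * Real.sin x ^ α = π ^ α * r ^ α := by
    calc (2 * (k:ℝ)) ^ α * Real.sin x ^ α
        = (2 * (k:ℝ)) ^ α * (x * r) ^ α := by rw [← hsplit]
      _ = (2 * (k:ℝ)) ^ α * (x ^ α * r ^ α) := by
          rw [Real.mul_rpow hx0.le hr0.le]
      _ = ((2 * (k:ℝ)) ^ α * x ^ α) * r ^ α := by ring
      _ = (2 * (k:ℝ) * x) ^ α * r ^ α := by rw [Real.mul_rpow h2k hx0.le]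
      _ = π ^ α * r ^ α := by rw [hπeq]
  have hcosarg : α * (π / 2 - x) = α * π / 2 - α * x := by ring
  rw [hcosarg, hLHS]
  have hπα : 0 < π ^ α := Real.rpow_pos_of_pos Real.pi_pos _
  rw [gt_iff_lt, mul_assoc, mul_lt_mul_iff_right₀ hπα]
  have hrle : r ≤ 1 := by
    rw [hrdef, div_le_one hx0]
    exact le_of_lt (Real.sin_lt hx0)
  have hrpow : r ≤ r ^ α := by
    calc r = r ^ (1:ℝ) := (Real.rpow_one _).symm
    _ ≤ r ^ α := Real.rpow_le_rpow_of_exponent_ge hr0 hrle hα1.le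
  have hcos2 : 0 < Real.cos (α * π / 2 - α * x) := by
    apply Real.cos_pos_of_mem_Ioo
    constructor <;> nlinarith [mul_pos hα0 hx0]
  calc Real.cos (α * π / 2) < r * Real.cos (α * π / 2 - α * x) := key
  _ ≤ r ^ α * Real.cos (α * π / 2 - α * x) :=
      mul_le_mul_of_nonneg_right hrpow hcos2.le
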